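/- Let W : GL⁺(2) → ℝ be objective, isotropic and isochoric. Then W is polyconvex if and only if W is rank-one convex. -/

import Mathlib

open Matrix Set

noncomputable section

/-- The space of real 2×2 matrices. -/
abbrev Mat2 : Type := Matrix (Fin 2) (Fin 2) ℝ

/-- The special orthogonal group SO(2): orthogonal 2×2 matrices with determinant 1. -/
def SO2 : Set Mat2 := {Q : Mat2 | Qᵀ * Q = 1 ∧ Q.det = 1}

/-- A function `W` (viewed on GL⁺(2) = {F | 0 < det F}) is polyconvex if there is a
convex function `P : ℝ^{2×2} × ℝ → ℝ ∪ {+∞}` with `W F = P (F, det F)` on GL⁺(2). -/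
def Polyconvex (W : Mat2 → ℝ) : Prop :=
  ∃ P : Mat2 × ℝ → EReal,
    (∀ x y : Mat2 × ℝ, ∀ a b : ℝ, 0 ≤ a → 0 ≤ b → a + b = 1 →
      P (a • x + b • y) ≤ (a : EReal) * P x + (b : EReal) * P y) ∧
    (∀ F : Mat2, 0 < F.det → (W F : EReal) = P (F, F.det))

/-- Rank-one convexity of `W` on GL⁺(2): convexity along rank-one line segments
lying in GL⁺(2). -/
def RankOneConvex (W : Mat2 → ℝ) : Prop :=
  ∀ F : Mat2, 0 < F.det → ∀ ξ η : Fin 2 → ℝ, ∀ θ : ℝ, θ ∈ Set.Icc (0:ℝ) 1 →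
    (∀ t ∈ Set.Icc (0:ℝ) 1, 0 < (F + t • vecMulVec ξ η).det) →
    W (F + (1 - θ) • vecMulVec ξ η) ≤ θ * W F + (1 - θ) * W (F + vecMulVec ξ η)

/-- Objectivity and isotropy: bi-SO(2)-invariance on GL⁺(2). -/
def ObjectiveIsotropic (W : Mat2 → ℝ) : Prop :=
  ∀ F : Mat2, 0 < F.det → ∀ Q₁ Q₂ : Mat2, Q₁ ∈ SO2 → Q₂ ∈ SO2 →
    W (Q₁ * F * Q₂) = W F

/-- Isochoric: invariance under positive scaling on GL⁺(2). -/
def Isochoric (W : Mat2 → ℝ) : Prop :=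
  ∀ F : Mat2, 0 < F.det → ∀ a : ℝ, 0 < a → W (a • F) = W F

/-- The 2×2 diagonal matrix diag(a, b). -/
def diag2 (a b : ℝ) : Mat2 := !![a, 0; 0, b]

/-- The squared Frobenius norm of a 2×2 matrix. -/
def frobSq (F : Mat2) : ℝ := ∑ i, ∑ j, (F i j) ^ 2

/-- The operator norm of `F` induced by the Euclidean norm on ℝ²:
the supremum of ‖F·x‖ over Euclidean-unit vectors x. -/
def opNorm2 (F : Mat2) : ℝ :=
  sSup {r : ℝ | ∃ x : Fin 2 → ℝ, (x 0) ^ 2 + (x 1) ^ 2 = 1 ∧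
    r = Real.sqrt ((F.mulVec x 0) ^ 2 + (F.mulVec x 1) ^ 2)}

/-! ### Auxiliary machinery -/

/-- Rotation matrix by angle θ. -/
def Rot (θ : ℝ) : Mat2 := !![Real.cos θ, -Real.sin θ; Real.sin θ, Real.cos θ]

/-- Entrywise inner product of 2×2 matrices. -/
def ip (A B : Mat2) : ℝ := A 0 0 * B 0 0 + A 0 1 * B 0 1 + A 1 0 * B 1 0 + A 1 1 * B 1 1

/-- An affine function on Mat2 × ℝ. -/
def lin (A : Mat2) (b c : ℝ) (x : Mat2 × ℝ) : ℝ := ip A x.1 + b * x.2 + c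

lemma Rot_mem_SO2 (θ : ℝ) : Rot θ ∈ SO2 := by
  have h := Real.sin_sq_add_cos_sq θ
  constructor
  · have ht : (Rot θ)ᵀ = !![Real.cos θ, Real.sin θ; -Real.sin θ, Real.cos θ] := by
      ext i j; fin_cases i <;> fin_cases j <;> rfl
    rw [ht, Rot, Matrix.mul_fin_two, Matrix.one_fin_two]
    ext i j; fin_cases i <;> fin_cases j <;> simp <;> nlinarith
  · rw [Rot, Matrix.det_fin_two]; simp; nlinarith

lemma det_Rot (θ : ℝ) : (Rot θ).det = 1 := (Rot_mem_SO2 θ).2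

lemma det_diag2 (a b : ℝ) : (diag2 a b).det = a * b := by
  simp [diag2, Matrix.det_fin_two]

lemma det_line (F : Mat2) (ξ η : Fin 2 → ℝ) (t : ℝ) :
    (F + t • vecMulVec ξ η).det
      = F.det + t * (F 0 0 * (ξ 1 * η 1) + F 1 1 * (ξ 0 * η 0)
          - F 0 1 * (ξ 1 * η 0) - F 1 0 * (ξ 0 * η 1)) := by
  have key : ∀ i j, (F + t • vecMulVec ξ η) i j = F i j + t * (ξ i * η j) := by
    intro i j; simp [Matrix.add_apply, Matrix.smul_apply, vecMulVec_apply, smul_eq_mul]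
  rw [Matrix.det_fin_two, Matrix.det_fin_two, key, key, key, key]; ring

lemma lin_affine (A : Mat2) (b c : ℝ) (x y : Mat2 × ℝ) (a' b' : ℝ) (hab : a' + b' = 1) :
    lin A b c (a' • x + b' • y) = a' * lin A b c x + b' * lin A b c y := by
  have key : ∀ i j, (a' • x + b' • y).1 i j = a' * x.1 i j + b' * y.1 i j := by
    intro i j
    simp [Prod.fst_add, Prod.smul_fst, Matrix.add_apply, Matrix.smul_apply, smul_eq_mul]
  have k2 : (a' • x + b' • y).2 = a' * x.2 + b' * y.2 := by
    simp [Prod.snd_add, Prod.smul_snd, smul_eq_mul]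
  simp only [lin, ip, key, k2]
  have hb' : b' = 1 - a' := by linarith
  subst hb'; ring

lemma coe_mul_le_mul {a u : ℝ} (ha : 0 ≤ a) {z : EReal} (h : (u : EReal) ≤ z) :
    ((a * u : ℝ) : EReal) ≤ (a : EReal) * z := by
  induction z using EReal.rec with
  | bot => simp at h
  | coe r =>
    rw [← EReal.coe_mul, EReal.coe_le_coe_iff]
    exact mul_le_mul_of_nonneg_left (EReal.coe_le_coe_iff.1 h) ha
  | top =>
    rcases eq_or_lt_of_le ha with heq | hlt
    · simp [← heq]
    · rw [EReal.mul_top_of_pos (by exact_mod_cast hlt)]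
      exact le_top

lemma polar' (x y : ℝ) : ∃ α : ℝ,
    x = Real.sqrt (x^2+y^2) * Real.cos α ∧ y = Real.sqrt (x^2+y^2) * Real.sin α := by
  rcases eq_or_lt_of_le (Real.sqrt_nonneg (x^2+y^2)) with h0 | hpos
  · have hsq : x ^ 2 + y ^ 2 = 0 := by
      have h := Real.sqrt_eq_zero'.mp h0.symm
      nlinarith [sq_nonneg x, sq_nonneg y]
    have hx : x = 0 := by nlinarith [sq_nonneg x, sq_nonneg y]
    have hy : y = 0 := by nlinarith [sq_nonneg x, sq_nonneg y]
    exact ⟨0, by rw [← h0, hx]; ring, by rw [← h0, hy]; ring⟩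
  · set z : ℂ := ⟨x, y⟩ with hz
    have habs : ‖z‖ = Real.sqrt (x^2+y^2) := by
      rw [Complex.norm_def, Complex.normSq_mk]; ring_nf
    have hzne : z ≠ 0 := by
      intro h
      rw [h] at habs
      simp at habs
      rw [← habs] at hpos
      exact lt_irrefl _ hpos
    refine ⟨Complex.arg z, ?_, ?_⟩
    · have h := Complex.cos_arg hzne
      rw [habs] at h
      have hre : z.re = x := rfl
      rw [hre] at h
      rw [h]; field_simp
    · have h := Complex.sin_arg z
      rw [habs] at h
      have him : z.im = y := rfl
      rw [him] at h
      rw [h]; field_simp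

/-- SVD for 2×2 matrices with positive determinant. -/
lemma svd2 (F : Mat2) (hF : 0 < F.det) :
    ∃ θ1 θ2 σ1 σ2 : ℝ, 0 < σ2 ∧ σ2 ≤ σ1 ∧ F = Rot θ1 * diag2 σ1 σ2 * Rot θ2 := by
  set p : ℝ := F 0 0 + F 1 1 with hp
  set q : ℝ := F 1 0 - F 0 1 with hq
  set u : ℝ := F 0 0 - F 1 1 with hu
  set v : ℝ := F 0 1 + F 1 0 with hv
  set ρ1 : ℝ := Real.sqrt (p^2+q^2) with hρ1
  set ρ2 : ℝ := Real.sqrt (u^2+v^2) with hρ2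
  obtain ⟨α, hpα, hqα⟩ := polar' p q
  obtain ⟨γ, huγ, hvγ⟩ := polar' u v
  rw [← hρ1] at hpα hqα
  rw [← hρ2] at huγ hvγ
  have hρ1sq : ρ1^2 = p^2 + q^2 := Real.sq_sqrt (by positivity)
  have hρ2sq : ρ2^2 = u^2 + v^2 := Real.sq_sqrt (by positivity)
  have hdet4 : ρ1^2 - ρ2^2 = 4 * F.det := by
    rw [hρ1sq, hρ2sq, Matrix.det_fin_two, hp, hq, hu, hv]; ring
  have hρ2nn : 0 ≤ ρ2 := Real.sqrt_nonneg _
  have hρ1nn : 0 ≤ ρ1 := Real.sqrt_nonneg _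
  have hgt : ρ2 < ρ1 := by nlinarith
  refine ⟨(α+γ)/2, (α-γ)/2, (ρ1+ρ2)/2, (ρ1-ρ2)/2, by linarith, by linarith, ?_⟩
  have hca : Real.cos α = Real.cos ((α+γ)/2) * Real.cos ((α-γ)/2)
      - Real.sin ((α+γ)/2) * Real.sin ((α-γ)/2) := by
    rw [← Real.cos_add]; ring_nf
  have hcg : Real.cos γ = Real.cos ((α+γ)/2) * Real.cos ((α-γ)/2)
      + Real.sin ((α+γ)/2) * Real.sin ((α-γ)/2) := by
    rw [← Real.cos_sub]; ring_nf
  have hsa : Real.sin α = Real.sin ((α+γ)/2) * Real.cos ((α-γ)/2)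
      + Real.cos ((α+γ)/2) * Real.sin ((α-γ)/2) := by
    rw [← Real.sin_add]; ring_nf
  have hsg : Real.sin γ = Real.sin ((α+γ)/2) * Real.cos ((α-γ)/2)
      - Real.cos ((α+γ)/2) * Real.sin ((α-γ)/2) := by
    rw [← Real.sin_sub]; ring_nf
  rw [hca] at hpα
  rw [hsa] at hqα
  rw [hcg] at huγ
  rw [hsg] at hvγ
  rw [hp] at hpα
  rw [hq] at hqα
  rw [hu] at huγ
  rw [hv] at hvγ
  ext i j
  fin_cases i <;> fin_cases j <;>
    simp [Rot, diag2, Matrix.mul_apply, Fin.sum_univ_two] <;>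
    linarith [hpα, hqα, huγ, hvγ]

lemma ip_rot (θ1 θ2 φ1 φ2 x1 x2 : ℝ) :
    ip (Rot θ1 * diag2 1 0 * Rot θ2) (Rot φ1 * diag2 x1 x2 * Rot φ2)
      = ((x1+x2)/2) * Real.cos ((θ1 - φ1) + (θ2 - φ2))
        + ((x1-x2)/2) * Real.cos ((θ1 - φ1) - (θ2 - φ2)) := by
  simp [ip, Rot, diag2, Matrix.mul_apply, Fin.sum_univ_two,
    Real.cos_add, Real.cos_sub, Real.sin_add, Real.sin_sub]
  ring

/-- von Neumann–type bound. -/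
lemma vonNeumann (θ1 θ2 φ1 φ2 x1 x2 : ℝ) (h2 : 0 ≤ x2) (h12 : x2 ≤ x1) :
    ip (Rot θ1 * diag2 1 0 * Rot θ2) (Rot φ1 * diag2 x1 x2 * Rot φ2) ≤ x1 := by
  rw [ip_rot]
  nlinarith [Real.cos_le_one ((θ1 - φ1) + (θ2 - φ2)), Real.cos_le_one ((θ1 - φ1) - (θ2 - φ2)),
    Real.neg_one_le_cos ((θ1 - φ1) + (θ2 - φ2)), Real.neg_one_le_cos ((θ1 - φ1) - (θ2 - φ2))]

section W
variable (W : Mat2 → ℝ) (hOI : ObjectiveIsotropic W) (hIso : Isochoric W)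

/-- The profile function of an isotropic isochoric energy. -/
def hf (t : ℝ) : ℝ := W (diag2 t 1)

include hOI hIso in
lemma W_eq_hf {θ1 θ2 σ1 σ2 : ℝ} (h2 : 0 < σ2) (h12 : σ2 ≤ σ1) :
    W (Rot θ1 * diag2 σ1 σ2 * Rot θ2) = hf W (σ1/σ2) := by
  have h1 : 0 < σ1 := lt_of_lt_of_le h2 h12
  have hdet : 0 < (diag2 σ1 σ2).det := by rw [det_diag2]; positivity
  have e1 : W (Rot θ1 * diag2 σ1 σ2 * Rot θ2) = W (diag2 σ1 σ2) :=
    hOI (diag2 σ1 σ2) hdet (Rot θ1) (Rot θ2) (Rot_mem_SO2 θ1) (Rot_mem_SO2 θ2)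
  have e2 : σ2 • diag2 (σ1/σ2) 1 = diag2 σ1 σ2 := by
    ext i j; fin_cases i <;> fin_cases j <;>
      simp [diag2, Matrix.smul_apply, smul_eq_mul] <;> field_simp
  have hdet2 : 0 < (diag2 (σ1/σ2) 1).det := by rw [det_diag2]; positivity
  have e3 : W (diag2 σ1 σ2) = W (diag2 (σ1/σ2) 1) := by
    rw [← e2]; exact hIso (diag2 (σ1/σ2) 1) hdet2 σ2 h2
  rw [e1, e3]; rfl

include hOI hIso in
lemma hf_symm {t : ℝ} (ht : 0 < t) : hf W (1/t) = hf W t := by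
  have e2 : (1/t) • diag2 1 t = diag2 (1/t) 1 := by
    ext i j; fin_cases i <;> fin_cases j <;>
      simp [diag2, Matrix.smul_apply, smul_eq_mul] <;> field_simp
  have hdt : 0 < (diag2 1 t).det := by rw [det_diag2]; linarith
  have e1 : hf W (1/t) = W (diag2 1 t) := by
    show W (diag2 (1/t) 1) = W (diag2 1 t)
    rw [← e2]
    exact hIso (diag2 1 t) hdt (1/t) (by positivity)
  have hJ : (!![0,-1;1,0] : Mat2) ∈ SO2 := by
    constructor
    · have ht2 : (!![0,-1;1,0] : Mat2)ᵀ = !![0,1;-1,0] := by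
        ext i j; fin_cases i <;> fin_cases j <;> rfl
      rw [ht2, Matrix.mul_fin_two, Matrix.one_fin_two]; norm_num
    · rw [Matrix.det_fin_two]; norm_num
  have hJ' : (!![0,1;-1,0] : Mat2) ∈ SO2 := by
    constructor
    · have ht2 : (!![0,1;-1,0] : Mat2)ᵀ = !![0,-1;1,0] := by
        ext i j; fin_cases i <;> fin_cases j <;> rfl
      rw [ht2, Matrix.mul_fin_two, Matrix.one_fin_two]; norm_num
    · rw [Matrix.det_fin_two]; norm_num
  have hdt1 : 0 < (diag2 t 1).det := by rw [det_diag2]; linarith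
  have e4 : (!![0,-1;1,0] : Mat2) * diag2 t 1 * !![0,1;-1,0] = diag2 1 t := by
    rw [diag2, Matrix.mul_fin_two, Matrix.mul_fin_two]
    ext i j; fin_cases i <;> fin_cases j <;> simp [diag2]
  have e5 : W (diag2 1 t) = W (diag2 t 1) := by
    rw [← e4]
    exact hOI (diag2 t 1) hdt1 _ _ hJ hJ'
  rw [e1, e5]; rfl

include hOI hIso in
lemma hf_conv (hR : RankOneConvex W) {a b θ : ℝ} (ha : 0 < a) (hb : 0 < b)
    (hθ0 : 0 ≤ θ) (hθ1 : θ ≤ 1) :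
    hf W (θ*a+(1-θ)*b) ≤ θ * hf W a + (1-θ) * hf W b := by
  set ξ : Fin 2 → ℝ := ![1, 0] with hξ
  set η : Fin 2 → ℝ := ![b-a, 0] with hη
  have hline : ∀ t : ℝ, diag2 a 1 + t • vecMulVec ξ η = diag2 (a + t*(b-a)) 1 := by
    intro t
    ext i j; fin_cases i <;> fin_cases j <;>
      simp [diag2, vecMulVec_apply, Matrix.add_apply, Matrix.smul_apply, hξ, hη, smul_eq_mul]
  have hda : 0 < (diag2 a 1).det := by rw [det_diag2]; linarith
  have key := hR (diag2 a 1) hda ξ η θ ⟨hθ0, hθ1⟩ ?_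
  · have e1 : diag2 a 1 + (1-θ) • vecMulVec ξ η = diag2 (θ*a+(1-θ)*b) 1 := by
      rw [hline]; congr 1; ring
    have e2 : diag2 a 1 + vecMulVec ξ η = diag2 b 1 := by
      have := hline 1; rw [one_smul] at this; rw [this]; congr 1; ring
    rw [e1, e2] at key
    exact key
  · intro t htI
    rw [hline, det_diag2]
    have : a + t*(b-a) = (1-t)*a + t*b := by ring
    rw [this]
    have h1 : 0 ≤ (1-t)*a := mul_nonneg (by linarith [htI.2]) ha.le
    have h2 : 0 ≤ t*b := mul_nonneg htI.1 hb.le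
    rcases eq_or_lt_of_le htI.1 with h0 | h0
    · rw [← h0]; simpa using ha
    · nlinarith

include hOI hIso in
lemma hf_min (hR : RankOneConvex W) {t : ℝ} (ht : 1 ≤ t) : hf W 1 ≤ hf W t := by
  rcases eq_or_lt_of_le ht with h1 | h1
  · rw [← h1]
  · have htpos : 0 < t := by linarith
    have hθ : (0:ℝ) ≤ t/(t+1) := by positivity
    have hθ1 : t/(t+1) ≤ 1 := by
      rw [div_le_one (by linarith)]; linarith
    have key := hf_conv W hOI hIso hR (a := 1/t) (b := t) (θ := t/(t+1))
      (by positivity) htpos hθ hθ1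
    have e1 : (t/(t+1))*(1/t)+(1-t/(t+1))*t = 1 := by field_simp; ring
    rw [e1, hf_symm W hOI hIso htpos] at key
    linarith [key]

include hOI hIso in
lemma hf_subgradient (hR : RankOneConvex W) {t₀ : ℝ} (ht₀ : 1 ≤ t₀) :
    ∃ s : ℝ, 0 ≤ s ∧ ∀ t, 1 ≤ t → hf W t₀ + s * (t - t₀) ≤ hf W t := by
  -- three-point slope inequality
  have slope : ∀ x w : ℝ, 0 < x → x < t₀ → t₀ < w →
      (hf W t₀ - hf W x) * (w - t₀) ≤ (hf W w - hf W t₀) * (t₀ - x) := by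
    intro x w hx hxt htw
    have hw : 0 < w := by linarith
    have hwx : 0 < w - x := by linarith
    set θ := (w - t₀)/(w - x) with hθdef
    have hθ0 : 0 ≤ θ := div_nonneg (by linarith) (by linarith)
    have hθ1 : θ ≤ 1 := by rw [hθdef, div_le_one hwx]; linarith
    have key := hf_conv W hOI hIso hR hx hw hθ0 hθ1
    have e1 : θ*x+(1-θ)*w = t₀ := by rw [hθdef]; field_simp; ring
    rw [e1] at key
    have expand : θ = (w - t₀)/(w - x) := hθdef
    have h2 : (w - x) * hf W t₀ ≤ (w - t₀) * hf W x + (t₀ - x) * hf W w := by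
      have := mul_le_mul_of_nonneg_left key hwx.le
      calc (w - x) * hf W t₀ ≤ (w - x) * (θ * hf W x + (1-θ) * hf W w) := by
            exact mul_le_mul_of_nonneg_left key hwx.le
        _ = (w - t₀) * hf W x + (t₀ - x) * hf W w := by
            rw [hθdef]; field_simp; ring
    nlinarith
  rcases eq_or_lt_of_le ht₀ with h1 | h1
  · refine ⟨0, le_refl 0, ?_⟩
    intro t ht
    have hm := hf_min W hOI hIso hR ht
    rw [← h1]
    simpa using hm
  · -- t₀ > 1
    set S : Set ℝ := {r : ℝ | ∃ w, t₀ < w ∧ r = (hf W w - hf W t₀)/(w - t₀)} with hS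
    have hne : S.Nonempty := ⟨(hf W (t₀+1) - hf W t₀)/(t₀+1-t₀), t₀+1, by linarith, by norm_num⟩
    have hlb : ∀ r ∈ S, (0:ℝ) ≤ r := by
      rintro r ⟨w, hw, rfl⟩
      have h0 : (0:ℝ) < 1 := one_pos
      have hs := slope 1 w one_pos h1 hw
      have hmin := hf_min W hOI hIso hR ht₀
      have hnum : 0 ≤ hf W w - hf W t₀ := by nlinarith
      exact div_nonneg hnum (by linarith)
    have hbdd : BddBelow S := ⟨0, fun r hr => hlb r hr⟩
    set s := sInf S with hs
    have hs0 : 0 ≤ s := le_csInf hne hlb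
    refine ⟨s, hs0, ?_⟩
    intro t ht
    rcases lt_trichotomy t t₀ with hlt | heq | hgt
    · -- t < t₀ : show s ≥ slope(t,t₀)
      have htpos : 0 < t := by linarith
      have hkey : (hf W t₀ - hf W t)/(t₀ - t) ≤ s := by
        apply le_csInf hne
        rintro r ⟨w, hw, rfl⟩
        have hsl := slope t w htpos hlt hw
        rw [div_le_div_iff₀ (by linarith) (by linarith)]
        nlinarith
      have := (div_le_iff₀ (by linarith : (0:ℝ) < t₀ - t)).mp hkey
      nlinarith
    · rw [heq]; simp
    · -- t > t₀
      have hmem : (hf W t - hf W t₀)/(t - t₀) ∈ S := ⟨t, hgt, rfl⟩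
      have hle : s ≤ (hf W t - hf W t₀)/(t - t₀) := csInf_le hbdd hmem
      have := (le_div_iff₀ (by linarith : (0:ℝ) < t - t₀)).mp hle
      nlinarith

include hOI hIso in
lemma minorant_exists (hR : RankOneConvex W) (F₀ : Mat2) (hF₀ : 0 < F₀.det) :
    ∃ (A : Mat2) (b c : ℝ),
      (∀ F : Mat2, 0 < F.det → lin A b c (F, F.det) ≤ W F) ∧
      lin A b c (F₀, F₀.det) = W F₀ := by
  obtain ⟨θ1, θ2, σ1, σ2, hσ2, hσ12, hF₀eq⟩ := svd2 F₀ hF₀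
  have hσ1 : 0 < σ1 := lt_of_lt_of_le hσ2 hσ12
  set t₀ := σ1/σ2 with ht₀def
  have ht₀ : 1 ≤ t₀ := (one_le_div hσ2).mpr hσ12
  obtain ⟨s, hs0, hsub⟩ := hf_subgradient W hOI hIso hR ht₀
  set A₁ : Mat2 := Rot θ1 * diag2 1 0 * Rot θ2 with hA₁
  refine ⟨(2*s/σ2) • A₁, -(s/σ2^2), hf W t₀ - s*t₀, ?_, ?_⟩
  · -- minorant property
    intro F hF
    obtain ⟨φ1, φ2, x1, x2, hx2, hx12, hFeq⟩ := svd2 F hF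
    have hx1 : 0 < x1 := lt_of_lt_of_le hx2 hx12
    have hWF : W F = hf W (x1/x2) := by rw [hFeq]; exact W_eq_hf W hOI hIso hx2 hx12
    have hdetF : F.det = x1 * x2 := by
      rw [hFeq, Matrix.det_mul, Matrix.det_mul, det_Rot, det_Rot, det_diag2]; ring
    have hipbound : ip A₁ F ≤ x1 := by
      rw [hFeq, hA₁]; exact vonNeumann θ1 θ2 φ1 φ2 x1 x2 hx2.le hx12
    have hsmul : ip ((2*s/σ2) • A₁) F = (2*s/σ2) * ip A₁ F := by
      simp [ip, Matrix.smul_apply, smul_eq_mul]; ring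
    have hcoef : 0 ≤ 2*s/σ2 := by positivity
    have step1 : (2*s/σ2) * ip A₁ F ≤ (2*s/σ2) * x1 := mul_le_mul_of_nonneg_left hipbound hcoef
    have hx12r : 1 ≤ x1/x2 := (one_le_div hx2).mpr hx12
    have step2 : hf W t₀ + s * (x1/x2 - t₀) ≤ hf W (x1/x2) := hsub (x1/x2) hx12r
    have step3 : (2*s/σ2) * x1 - (s/σ2^2) * (x1*x2) ≤ s * (x1/x2) := by
      have key : s * (x1/x2) - ((2*s/σ2) * x1 - (s/σ2^2) * (x1*x2))
          = s * x1 * (σ2 - x2)^2 / (x2 * σ2^2) := by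
        field_simp; ring
      have hnn : 0 ≤ s * x1 * (σ2 - x2)^2 / (x2 * σ2^2) := by positivity
      linarith
    rw [hWF]
    simp only [lin, hdetF]
    rw [hsmul]
    have : (2*s/σ2) * ip A₁ F + -(s/σ2^2) * (x1*x2) + (hf W t₀ - s*t₀)
        ≤ (2*s/σ2) * x1 + -(s/σ2^2) * (x1*x2) + (hf W t₀ - s*t₀) := by linarith
    calc (2*s/σ2) * ip A₁ F + -(s/σ2^2) * (x1*x2) + (hf W t₀ - s*t₀)
        ≤ (2*s/σ2) * x1 + -(s/σ2^2) * (x1*x2) + (hf W t₀ - s*t₀) := this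
      _ ≤ s * (x1/x2) + (hf W t₀ - s*t₀) := by linarith
      _ = hf W t₀ + s * (x1/x2 - t₀) := by ring
      _ ≤ hf W (x1/x2) := step2
  · -- touching
    have hWF₀ : W F₀ = hf W t₀ := by rw [hF₀eq]; exact W_eq_hf W hOI hIso hσ2 hσ12
    have hdetF₀ : F₀.det = σ1 * σ2 := by
      rw [hF₀eq, Matrix.det_mul, Matrix.det_mul, det_Rot, det_Rot, det_diag2]; ring
    have hiptouch : ip A₁ F₀ = σ1 := by
      rw [hF₀eq, hA₁, ip_rot]
      simp
      ring
    have hsmul : ip ((2*s/σ2) • A₁) F₀ = (2*s/σ2) * ip A₁ F₀ := by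
      simp [ip, Matrix.smul_apply, smul_eq_mul]; ring
    simp only [lin, hdetF₀]
    rw [hsmul, hiptouch, hWF₀, ht₀def]
    field_simp
    ring

end W

theorem isochoric_polyconvex_iff_rankOneConvex (W : Mat2 → ℝ)
    (hOI : ObjectiveIsotropic W) (hIso : Isochoric W) :
    Polyconvex W ↔ RankOneConvex W := by
  constructor
  · rintro ⟨P, hPconv, hPeq⟩ F hF ξ η θ hθ hline
    set M := vecMulVec ξ η with hM
    have hd2 : 0 < (F + (1-θ) • M).det := hline (1-θ) ⟨by linarith [hθ.2], by linarith [hθ.1]⟩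
    have hd3 : 0 < (F + M).det := by
      have := hline 1 ⟨zero_le_one, le_refl 1⟩
      rwa [one_smul] at this
    have haff : θ * F.det + (1-θ) * (F + M).det = (F + (1-θ) • M).det := by
      have e1 : (F + M).det = (F + (1:ℝ) • M).det := by rw [one_smul]
      rw [e1, hM, det_line, det_line]; ring
    have hxy : θ • ((F, F.det) : Mat2 × ℝ) + (1-θ) • ((F + M, (F + M).det) : Mat2 × ℝ)
        = ((F + (1-θ) • M, (F + (1-θ) • M).det) : Mat2 × ℝ) := by
      apply Prod.ext
      · show θ • F + (1-θ) • (F + M) = F + (1-θ) • M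
        ext i j
        simp [Matrix.add_apply, Matrix.smul_apply, smul_eq_mul]
        ring
      · show θ * F.det + (1-θ) * (F + M).det = (F + (1-θ) • M).det
        exact haff
    have key := hPconv (F, F.det) (F + M, (F + M).det) θ (1-θ) hθ.1 (by linarith [hθ.2]) (by ring)
    rw [hxy, ← hPeq _ hd2, ← hPeq _ hF, ← hPeq _ hd3] at key
    rw [← EReal.coe_mul, ← EReal.coe_mul, ← EReal.coe_add, EReal.coe_le_coe_iff] at key
    exact key
  · intro hR
    have hmin := minorant_exists W hOI hIso hR
    choose A b c hbound htouch using hmin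
    set P : Mat2 × ℝ → EReal := fun x =>
      ⨆ G : {G : Mat2 // 0 < G.det}, ((lin (A G.1 G.2) (b G.1 G.2) (c G.1 G.2) x : ℝ) : EReal)
      with hP
    refine ⟨P, ?_, ?_⟩
    · intro x y a' b' ha' hb' hab
      apply iSup_le
      intro G
      rw [lin_affine _ _ _ x y a' b' hab, EReal.coe_add]
      have h1 : ((lin (A G.1 G.2) (b G.1 G.2) (c G.1 G.2) x : ℝ) : EReal) ≤ P x :=
        le_iSup (fun G : {G : Mat2 // 0 < G.det} =>
          ((lin (A G.1 G.2) (b G.1 G.2) (c G.1 G.2) x : ℝ) : EReal)) G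
      have h2 : ((lin (A G.1 G.2) (b G.1 G.2) (c G.1 G.2) y : ℝ) : EReal) ≤ P y :=
        le_iSup (fun G : {G : Mat2 // 0 < G.det} =>
          ((lin (A G.1 G.2) (b G.1 G.2) (c G.1 G.2) y : ℝ) : EReal)) G
      exact add_le_add (coe_mul_le_mul ha' h1) (coe_mul_le_mul hb' h2)
    · intro F hF
      apply le_antisymm
      · have h1 : ((lin (A F hF) (b F hF) (c F hF) (F, F.det) : ℝ) : EReal) ≤ P (F, F.det) :=
          le_iSup (fun G : {G : Mat2 // 0 < G.det} =>
            ((lin (A G.1 G.2) (b G.1 G.2) (c G.1 G.2) (F, F.det) : ℝ) : EReal)) ⟨F, hF⟩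
        rwa [htouch F hF] at h1
      · apply iSup_le
        intro G
        exact EReal.coe_le_coe_iff.2 (hbound G.1 G.2 F hF)
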